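/- Let k be a field, S = k[t], R a core of S with t^{c}S ⊆ R (c ≥ 1), and R = k[t^e, t^{e+1}, ..., t^{2e-1}] for some integer e ≥ 2. Let 0 ≠ α ∈ k and f = 1 − αt. Then the maximal ideal M = fS ∩ R satisfies M = (t^e − α t^{e+1}, 1 − α^e t^e) as an ideal of R. -/

import Mathlib

open Polynomial

/-- The subalgebra of polynomials whose coefficients in degrees `1, …, e-1` vanish. -/
def coeffSubalgebra (k : Type*) [Field k] (e : ℕ) : Subalgebra k (Polynomial k) where
  carrier := {p | ∀ i, 0 < i → i < e → p.coeff i = 0}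
  add_mem' := by
    intro p q hp hq i h1 h2
    simp [coeff_add, hp i h1 h2, hq i h1 h2]
  mul_mem' := by
    intro p q hp hq i h1 h2
    rw [coeff_mul]
    apply Finset.sum_eq_zero
    rintro ⟨a, b⟩ hab
    rw [Finset.HasAntidiagonal.mem_antidiagonal] at hab
    rcases Nat.eq_zero_or_pos a with ha | ha
    · have hb : b = i := by omega
      simp [hb, hq i h1 h2]
    · simp [hp a ha (by omega)]
  one_mem' := by
    intro i h1 h2
    simp [coeff_one, Nat.pos_iff_ne_zero.mp h1]
  zero_mem' := by intro i h1 h2; simp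
  algebraMap_mem' := by
    intro c i h1 h2
    simp [coeff_C, Nat.pos_iff_ne_zero.mp h1]

lemma mem_coeffSubalgebra_iff (k : Type*) [Field k] (e : ℕ) (p : Polynomial k) :
    p ∈ coeffSubalgebra k e ↔ ∀ i, 0 < i → i < e → p.coeff i = 0 := Iff.rfl

lemma adjoin_eq_coeffSubalgebra (k : Type*) [Field k] (e : ℕ) (he : 2 ≤ e) :
    Algebra.adjoin k
      {p : Polynomial k | ∃ i : ℕ, e ≤ i ∧ i ≤ 2 * e - 1 ∧ p = (X : Polynomial k) ^ i} =
    coeffSubalgebra k e := by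
  have hXmem : ∀ i, e ≤ i → (X : Polynomial k) ^ i ∈ Algebra.adjoin k
      {p : Polynomial k | ∃ i : ℕ, e ≤ i ∧ i ≤ 2 * e - 1 ∧ p = (X : Polynomial k) ^ i} := by
    intro i
    induction i using Nat.strong_induction_on with
    | _ i ih =>
      intro hi
      by_cases h2 : i ≤ 2 * e - 1
      · exact Algebra.subset_adjoin ⟨i, hi, h2, rfl⟩
      · have hsplit : i = e + (i - e) := by omega
        rw [hsplit, pow_add]
        exact mul_mem (Algebra.subset_adjoin ⟨e, le_refl e, by omega, rfl⟩)
          (ih (i - e) (by omega) (by omega))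
  apply le_antisymm
  · apply Algebra.adjoin_le
    rintro p ⟨i, hi, _, rfl⟩ j h1 h2
    rw [coeff_X_pow]
    rw [if_neg (by omega)]
  · intro p hp
    rw [p.as_sum_support]
    apply sum_mem
    intro i hi
    rcases Nat.eq_zero_or_pos i with h0 | h0
    · subst h0
      rw [monomial_zero_left]
      exact Subalgebra.algebraMap_mem _ _
    · have hie : e ≤ i := by
        by_contra hlt
        exact (mem_support_iff.mp hi) (hp i h0 (by omega))
      rw [← C_mul_X_pow_eq_monomial]
      exact mul_mem (Subalgebra.algebraMap_mem _ _) (hXmem i hie)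

/-- for `R = k[t^e, t^{e+1}, …, t^{2e-1}]` (`e ≥ 2`), `0 ≠ α ∈ k` and
`f = 1 − αt`, the maximal ideal `M = fS ∩ R` equals
`(t^e − α t^{e+1}, 1 − α^e t^e)`. -/
theorem max_ideal_two_gens_full_semigroup
    (k : Type*) [Field k] (e : ℕ) (he : 2 ≤ e)
    (R : Subalgebra k (Polynomial k))
    (hRdef : R = Algebra.adjoin k
      {p : Polynomial k | ∃ i : ℕ, e ≤ i ∧ i ≤ 2 * e - 1 ∧ p = (X : Polynomial k) ^ i})
    (α : k) (hα : α ≠ 0)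
    (f : Polynomial k) (hfdef : f = 1 - C α * X) :
    (Ideal.span {f}).comap (algebraMap R (Polynomial k)) =
      Ideal.span {x : R |
        (x : Polynomial k) = (X : Polynomial k) ^ e - C α * X ^ (e + 1) ∨
        (x : Polynomial k) = 1 - C (α ^ e) * X ^ e} := by
  have hRT : R = coeffSubalgebra k e := by
    rw [hRdef, adjoin_eq_coeffSubalgebra k e he]
  have hmemR : ∀ p : Polynomial k, p ∈ R ↔ ∀ i, 0 < i → i < e → p.coeff i = 0 := by
    intro p; rw [hRT]; exact Iff.rfl
  -- the two generators
  set g₁ : Polynomial k := (X : Polynomial k) ^ e - C α * X ^ (e + 1) with hg₁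
  set g₂ : Polynomial k := 1 - C (α ^ e) * X ^ e with hg₂
  have hg₁f : g₁ = f * X ^ e := by rw [hg₁, hfdef]; ring
  have hfg₂ : f ∣ g₂ := by
    have h := sub_dvd_pow_sub_pow (1 : Polynomial k) (C α * X) e
    simp only [one_pow, mul_pow, ← C_pow] at h
    rw [hfdef, hg₂]
    exact h
  have hg₁R : g₁ ∈ R := by
    rw [hmemR]
    intro i h1 h2
    rw [hg₁]
    simp only [coeff_sub, coeff_C_mul, coeff_X_pow]
    rw [if_neg (by omega), if_neg (by omega)]
    ring
  have hg₂R : g₂ ∈ R := by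
    rw [hmemR]
    intro i h1 h2
    rw [hg₂]
    simp only [coeff_sub, coeff_one, coeff_C_mul, coeff_X_pow]
    rw [if_neg (by omega), if_neg (by omega)]
    ring
  set G₁ : R := ⟨g₁, hg₁R⟩ with hG₁
  set G₂ : R := ⟨g₂, hg₂R⟩ with hG₂
  set Jset : Set R := {x : R |
        (x : Polynomial k) = (X : Polynomial k) ^ e - C α * X ^ (e + 1) ∨
        (x : Polynomial k) = 1 - C (α ^ e) * X ^ e} with hJset
  have hG₁J : G₁ ∈ Ideal.span Jset := Ideal.subset_span (Or.inl rfl)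
  have hG₂J : G₂ ∈ Ideal.span Jset := Ideal.subset_span (Or.inr rfl)
  -- membership of the key auxiliary elements in R
  have hfXR : ∀ i : ℕ, (X : Polynomial k) ^ (e + i) * f ∈ R := by
    intro i
    have hE : (X : Polynomial k) ^ (e + i) * f = X ^ (e + i) - C α * X ^ (e + i + 1) := by
      rw [hfdef]; ring
    rw [hmemR, hE]
    intro j h1 h2
    simp only [coeff_sub, coeff_C_mul, coeff_X_pow]
    rw [if_neg (by omega), if_neg (by omega)]
    ring
  -- key claim, step 1: for i = 0 or i ≥ e
  have HJ1 : ∀ i : ℕ, (X : Polynomial k) ^ i ∈ R →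
      (⟨X ^ (e + i) * f, hfXR i⟩ : R) ∈ Ideal.span Jset := by
    intro i hXi
    have heq : (⟨X ^ (e + i) * f, hfXR i⟩ : R) = ⟨X ^ i, hXi⟩ * G₁ := by
      apply Subtype.ext
      show (X : Polynomial k) ^ (e + i) * f = X ^ i * g₁
      rw [hg₁f, pow_add]; ring
    rw [heq]
    exact Ideal.mul_mem_left _ _ hG₁J
  -- key claim, step 2: all i
  have HJ2 : ∀ i : ℕ, (⟨X ^ (e + i) * f, hfXR i⟩ : R) ∈ Ideal.span Jset := by
    intro i
    by_cases hc : i = 0 ∨ e ≤ i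
    · apply HJ1
      rcases hc with h0 | hie
      · subst h0; simpa using Subalgebra.one_mem R
      · rw [hmemR]
        intro j h1 h2
        rw [coeff_X_pow, if_neg (by omega)]
    · push_neg at hc
      have hXei : (X : Polynomial k) ^ (e + i) ∈ R := by
        rw [hmemR]
        intro j h1 h2
        rw [coeff_X_pow, if_neg (by omega)]
      have hz2 : (⟨X ^ (e + (e + i)) * f, hfXR (e + i)⟩ : R) ∈ Ideal.span Jset :=
        HJ1 (e + i) hXei
      have heq : (⟨X ^ (e + i) * f, hfXR i⟩ : R) =
          (⟨X ^ (e + i) * f, hfXR i⟩ : R) * G₂ +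
            α ^ e • (⟨X ^ (e + (e + i)) * f, hfXR (e + i)⟩ : R) := by
        apply Subtype.ext
        push_cast
        show (X : Polynomial k) ^ (e + i) * f =
          X ^ (e + i) * f * g₂ + α ^ e • (X ^ (e + (e + i)) * f)
        rw [hg₂, Polynomial.smul_eq_C_mul, map_pow]
        ring
      rw [heq]
      exact add_mem (Ideal.mul_mem_left _ _ hG₂J)
        (by rw [Algebra.smul_def]; exact Ideal.mul_mem_left _ _ hz2)
  -- now the ideal equality
  apply le_antisymm
  · -- hard direction
    intro x hx
    rw [Ideal.mem_comap, Ideal.mem_span_singleton] at hx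
    have hxv : algebraMap R (Polynomial k) x = (x : Polynomial k) := rfl
    rw [hxv] at hx
    set c : k := (x : Polynomial k).coeff 0 with hc
    have hx' : f ∣ ((x - c • G₂ : R) : Polynomial k) := by
      push_cast
      rw [Polynomial.smul_eq_C_mul]
      exact dvd_sub hx (Dvd.dvd.mul_left hfg₂ _)
    have hcoeff : ∀ i < e, ((x - c • G₂ : R) : Polynomial k).coeff i = 0 := by
      intro i hie
      push_cast
      rw [Polynomial.smul_eq_C_mul]
      rcases Nat.eq_zero_or_pos i with h0 | h0
      · subst h0
        simp [show ((G₂ : R) : Polynomial k) = g₂ from rfl, hg₂, coeff_X_pow, if_neg (by omega : ¬ (0 : ℕ) = e), hc]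
      · rw [coeff_sub, (hmemR _).mp x.2 i h0 hie, coeff_C_mul, show ((G₂ : R) : Polynomial k) = g₂ from rfl, hg₂]
        simp only [coeff_sub, coeff_one, coeff_C_mul, coeff_X_pow]
        rw [if_neg (by omega), if_neg (by omega)]
        ring
    have hXe : (X : Polynomial k) ^ e ∣ ((x - c • G₂ : R) : Polynomial k) := by
      rw [X_pow_dvd_iff]
      exact hcoeff
    obtain ⟨w, hw⟩ := hXe
    have hfw : f ∣ w := by
      have hcop : IsCoprime f ((X : Polynomial k) ^ e) := by
        apply IsCoprime.pow_right
        exact ⟨1, C α, by rw [hfdef]; ring⟩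
      exact hcop.dvd_of_dvd_mul_left (by rw [← hw]; exact hx')
    obtain ⟨v, hv⟩ := hfw
    have hsum : (x - c • G₂ : R) =
        ∑ i ∈ v.support, v.coeff i • (⟨X ^ (e + i) * f, hfXR i⟩ : R) := by
      apply Subtype.ext
      rw [AddSubmonoidClass.coe_finset_sum]
      show ((x - c • G₂ : R) : Polynomial k) = _
      rw [hw, hv]
      conv_lhs => rw [v.as_sum_support_C_mul_X_pow]
      rw [Finset.mul_sum, Finset.mul_sum]
      apply Finset.sum_congr rfl
      intro i _
      show (X : Polynomial k) ^ e * (f * (C (v.coeff i) * X ^ i)) =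
        v.coeff i • ((X : Polynomial k) ^ (e + i) * f)
      rw [Polynomial.smul_eq_C_mul, pow_add]
      ring
    have hmem1 : (x - c • G₂ : R) ∈ Ideal.span Jset := by
      rw [hsum]
      apply sum_mem
      intro i _
      rw [Algebra.smul_def]
      exact Ideal.mul_mem_left _ _ (HJ2 i)
    have : x = (x - c • G₂) + c • G₂ := by ring
    rw [this]
    exact add_mem hmem1 (by rw [Algebra.smul_def]; exact Ideal.mul_mem_left _ _ hG₂J)
  · -- easy direction
    rw [Ideal.span_le]
    rintro x (hx1 | hx2) <;>
      · rw [SetLike.mem_coe, Ideal.mem_comap, Ideal.mem_span_singleton]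
        first
        | (rw [show algebraMap R (Polynomial k) x = (x : Polynomial k) from rfl, hx1, ← hg₁,
            hg₁f]; exact Dvd.intro _ rfl)
        | (rw [show algebraMap R (Polynomial k) x = (x : Polynomial k) from rfl, hx2, ← hg₂];
            exact hfg₂)
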